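/- In any triangle with circumradius R, inradius r, and semiperimeter s, ((4R + r)/s)² + 9r/(4R + r) ≥ 4. -/

import Mathlib

theorem schur0 (u v w : ℝ) (hu : 0 ≤ u) (hv : 0 ≤ v) (hw : 0 ≤ w) :
    4*(u+v+w)*(u*v+v*w+w*u) ≤ (u+v+w)^3 + 9*(u*v*w) := by
  rcases le_total u v with h1 | h1 <;> rcases le_total v w with h2 | h2 <;>
    rcases le_total u w with h3 | h3 <;>
  nlinarith [mul_nonneg (mul_nonneg hu hv) hw, sq_nonneg (u-v), sq_nonneg (v-w), sq_nonneg (u-w),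
    mul_nonneg hu (sq_nonneg (v-w)), mul_nonneg hv (sq_nonneg (u-w)), mul_nonneg hw (sq_nonneg (u-v))]

theorem schur6 (x y z : ℝ) (hx : 0 < x) (hy : 0 < y) (hz : 0 < z) :
    4*(x+y+z)*(x*y*z)*(x*y+y*z+z*x) ≤ (x*y+y*z+z*x)^3 + 9*(x*y*z)^2 := by
  have h := schur0 (x*y) (y*z) (z*x) (by positivity) (by positivity) (by positivity)
  nlinarith [h]

theorem key_ineq (a b c : ℝ) (ha : 0 < a) (hb : 0 < b) (hc : 0 < c)
    (hA : a < b + c) (hB : b < c + a) (hC : c < a + b) (s S : ℝ) (hs : s = (a + b + c) / 2)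
    (hS : S = Real.sqrt (s * (s - a) * (s - b) * (s - c))) (R : ℝ) (hR : R = a * b * c / (4 * S)) (r : ℝ) (hr : r = S / s) :
    ((4 * R + r) / s) ^ 2 + 9 * r / (4 * R + r) ≥ 4 := by
  have hx : 0 < s - a := by rw [hs]; linarith
  have hy : 0 < s - b := by rw [hs]; linarith
  have hz : 0 < s - c := by rw [hs]; linarith
  have hsp : 0 < s := by rw [hs]; linarith
  set x := s - a with hxd
  set y := s - b with hyd
  set z := s - c with hzd
  have hsum : x + y + z = s := by rw [hxd, hyd, hzd, hs]; ring
  set p := x * y * z with hpd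
  set q := x * y + y * z + z * x with hqd
  have hpp : 0 < p := by positivity
  have hqp : 0 < q := by positivity
  have hS2 : S ^ 2 = s * p := by
    rw [hS, Real.sq_sqrt (by positivity)]; ring
  have hSpos : 0 < S := by
    rw [hS]; exact Real.sqrt_pos.mpr (by positivity)
  -- abc + xyz = s*q
  have habc : a * b * c + p = s * q := by
    rw [hpd, hqd, hxd, hyd, hzd, hs]; ring
  have e1 : 4 * R + r = s * q / S := by
    rw [hR, hr]
    field_simp
    linear_combination hS2 + s*habc
  rw [e1, hr]
  have e2 : (s * q / S / s) ^ 2 = q ^ 2 / (s * p) := by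
    rw [← hS2]; field_simp
  have e3 : 9 * (S / s) / (s * q / S) = 9 * p / (s * q) := by
    rw [eq_div_iff (by positivity)]
    field_simp
    linear_combination hS2
  rw [e2, e3, ge_iff_le,
    div_add_div _ _ (by positivity : (s*p) ≠ 0) (by positivity : (s*q) ≠ 0),
    le_div_iff₀ (by positivity)]
  rw [← hsum, hpd, hqd]
  nlinarith [mul_le_mul_of_nonneg_left (schur6 x y z hx hy hz)
    (by positivity : (0:ℝ) ≤ x + y + z)]
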